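/- arXiv:2411.00343 — 2 statements merged into one kernel-verified Lean document; each statement's English description precedes it below -/
import Mathlib

section
/- Every triangle-forest G has a matching M such that the graph G/M obtained by contracting every edge of M is a forest. -/
open SimpleGraph

/-- `H` is isomorphic to a subgraph of `G`. -/
def Contains {α β : Type} (H : SimpleGraph α) (G : SimpleGraph β) : Prop :=
  ∃ f : α ↪ β, ∀ ⦃u v⦄, H.Adj u v → G.Adj (f u) (f v)

/-- The strong product of two graphs. -/
def StrongProd {α β : Type} (G : SimpleGraph α) (H : SimpleGraph β) :
    SimpleGraph (α × β) where
  Adj x y := x ≠ y ∧ (x.1 = y.1 ∨ G.Adj x.1 y.1) ∧ (x.2 = y.2 ∨ H.Adj x.2 y.2)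
  symm := by
    constructor
    rintro x y ⟨h1, h2, h3⟩
    exact ⟨h1.symm, h2.imp Eq.symm SimpleGraph.Adj.symm, h3.imp Eq.symm SimpleGraph.Adj.symm⟩
  loopless := ⟨fun x h => h.1 rfl⟩

/-- `H` is a minor of `G`, witnessed by disjoint connected branch sets. -/
def IsMinorOf {α β : Type} (H : SimpleGraph α) (G : SimpleGraph β) : Prop :=
  ∃ B : α → Set β,
    (∀ a, (G.induce (B a)).Connected) ∧
    (Pairwise fun a b => Disjoint (B a) (B b)) ∧
    (∀ ⦃a b⦄, H.Adj a b → ∃ x ∈ B a, ∃ y ∈ B b, G.Adj x y)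

/-- A graph is planar iff it has no `K₅` minor and no `K₃,₃` minor (Wagner's theorem). -/
def IsPlanar {α : Type} (G : SimpleGraph α) : Prop :=
  ¬ IsMinorOf (completeGraph (Fin 5)) G ∧
  ¬ IsMinorOf (completeBipartiteGraph (Fin 3) (Fin 3)) G

/-- `G` has a tree-decomposition of width at most `k`. -/
def HasTreewidthLE {α : Type} (G : SimpleGraph α) (k : ℕ) : Prop :=
  ∃ (ι : Type) (T : SimpleGraph ι) (B : ι → Set α),
    T.IsTree ∧
    (∀ ⦃u v⦄, G.Adj u v → ∃ i, u ∈ B i ∧ v ∈ B i) ∧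
    (∀ v, (T.induce {i | v ∈ B i}).Connected) ∧
    (∀ i, (B i).Finite ∧ (B i).ncard ≤ k + 1)

/-- `G` has a path-decomposition of width at most `k`. -/
def HasPathwidthLE {α : Type} (G : SimpleGraph α) (k : ℕ) : Prop :=
  ∃ (m : ℕ) (B : Fin m → Set α),
    (∀ ⦃u v⦄, G.Adj u v → ∃ i, u ∈ B i ∧ v ∈ B i) ∧
    (∀ v, ∃ i, v ∈ B i) ∧
    (∀ v (i j l : Fin m), i ≤ j → j ≤ l → v ∈ B i → v ∈ B l → v ∈ B j) ∧
    (∀ i, (B i).Finite ∧ (B i).ncard ≤ k + 1)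

/-- The quotient of `G` by a family of sets of vertices: vertices are the members of `P`,
two parts being adjacent iff some pair of representatives is adjacent in `G`. -/
def QuotientGraph {α : Type} (G : SimpleGraph α) (P : Set (Set α)) :
    SimpleGraph P where
  Adj A B := A ≠ B ∧ ∃ a ∈ (A : Set α), ∃ b ∈ (B : Set α), G.Adj a b
  symm := by
    constructor
    rintro A B ⟨h1, a, ha, b, hb, hab⟩
    exact ⟨h1.symm, b, hb, a, ha, hab.symm⟩
  loopless := ⟨fun A h => h.1 rfl⟩

/-- A partition of the vertices of `G` is a tree-partition if the quotient graph is
contained in a tree. -/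
def IsTreePartition {α : Type} (G : SimpleGraph α) (P : Set (Set α)) : Prop :=
  Setoid.IsPartition P ∧
  ∃ (ι : Type) (T : SimpleGraph ι), T.IsTree ∧ Contains (QuotientGraph G P) T

/-- A matching: a set of edges of `G`, pairwise not sharing a vertex. -/
def IsMatchingSet {α : Type} (G : SimpleGraph α) (M : Set (Sym2 α)) : Prop :=
  M ⊆ G.edgeSet ∧ M.Pairwise fun e f => ∀ v, v ∈ e → v ∉ f

/-- The parts obtained from a matching: matched pairs and singletons of unmatched vertices. -/
def matchingParts {α : Type} (M : Set (Sym2 α)) : Set (Set α) :=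
  {S | (∃ e ∈ M, S = {x | x ∈ e}) ∨ ∃ v, (∀ e ∈ M, v ∉ e) ∧ S = {v}}

/-- The graph `G/M` obtained by contracting each edge of a matching `M`. -/
def ContractMatching {α : Type} (G : SimpleGraph α) (M : Set (Sym2 α)) :
    SimpleGraph (matchingParts M) :=
  QuotientGraph G (matchingParts M)

/-- A graph is a path graph if it is isomorphic to `pathGraph n` for some `n`. -/
def IsPathGraph {α : Type} (G : SimpleGraph α) : Prop :=
  ∃ n : ℕ, Nonempty (G ≃g SimpleGraph.pathGraph n)

/-- A graph in which every cycle is a triangle. -/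
def IsTriangleForest {α : Type} (G : SimpleGraph α) : Prop :=
  ∀ (v : α) (w : G.Walk v v), w.IsCycle → w.length = 3

/-- `G` is `k`-apex: removing at most `k` vertices leaves a planar graph. -/
def IsKApex {α : Type} (G : SimpleGraph α) (k : ℕ) : Prop :=
  ∃ A : Set α, A.ncard ≤ k ∧ IsPlanar (G.induce Aᶜ)

/-- `G` is an apex-forest: removing at most one vertex leaves a forest. -/
def IsApexForest {α : Type} (G : SimpleGraph α) : Prop :=
  ∃ A : Set α, A.ncard ≤ 1 ∧ (G.induce Aᶜ).IsAcyclic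

/-- `G⁺`: the graph `G` together with one new dominant vertex. -/
def AddDominant {α : Type} (G : SimpleGraph α) : SimpleGraph (Option α) where
  Adj x y := match x, y with
    | some a, some b => G.Adj a b
    | some _, none => True
    | none, some _ => True
    | none, none => False
  symm := by constructor; rintro (_|a) (_|b) h <;> simp_all [SimpleGraph.Adj.symm, adj_symm]
  loopless := by constructor; rintro (_|a) h <;> simp_all

/-- `G'` is a distension of `G`: for each edge `vw` of `G`, a non-empty path, complete
to `{v, w}`, is added, with the added paths disjoint from `G` and from each other. -/
def IsDistension {α β : Type} (G : SimpleGraph α) (G' : SimpleGraph β) : Prop :=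
  ∃ (g : α ↪ β) (f : β → Sym2 α),
    (∀ u v : α, G'.Adj (g u) (g v) ↔ G.Adj u v) ∧
    (∀ w : β, w ∉ Set.range g → f w ∈ G.edgeSet) ∧
    (∀ w : β, w ∉ Set.range g → ∀ v : α, (G'.Adj w (g v) ↔ v ∈ f w)) ∧
    (∀ w w' : β, w ∉ Set.range g → w' ∉ Set.range g → G'.Adj w w' → f w = f w') ∧
    (∀ e ∈ G.edgeSet, {w : β | w ∉ Set.range g ∧ f w = e}.Nonempty ∧
      IsPathGraph (G'.induce {w : β | w ∉ Set.range g ∧ f w = e}))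

namespace TF4

variable {V : Type} (G : SimpleGraph V)

noncomputable def rt (v : V) : V := (G.connectedComponentMk v).out

noncomputable def dd (v : V) : ℕ := G.dist (rt G v) v

variable {G}

lemma reach_rt (v : V) : G.Reachable (rt G v) v := by
  apply ConnectedComponent.exact
  exact (G.connectedComponentMk v).out_eq

lemma rt_adj {u v : V} (h : G.Adj u v) : rt G u = rt G v := by
  unfold rt
  rw [ConnectedComponent.connectedComponentMk_eq_of_adj h]

lemma dd_le_adj {u v : V} (h : G.Adj u v) : dd G v ≤ dd G u + 1 := by
  obtain ⟨p, hp⟩ := (reach_rt (G := G) u).exists_walk_length_eq_dist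
  have := SimpleGraph.dist_le (p.concat h)
  rw [Walk.length_concat, hp] at this
  unfold dd
  rwa [← rt_adj h]

lemma dd_zero {v : V} (h : dd G v = 0) : v = rt G v := by
  obtain ⟨p, hp⟩ := (reach_rt (G := G) v).exists_walk_length_eq_dist
  exact (Walk.eq_of_length_eq_zero (by rw [hp, ← h]; rfl)).symm

/-- parent existence -/
lemma parent {v : V} {k : ℕ} (h : dd G v = k + 1) :
    ∃ u, G.Adj v u ∧ dd G u = k ∧ rt G u = rt G v := by
  obtain ⟨p, hp⟩ := (reach_rt (G := G) v).exists_walk_length_eq_dist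
  -- p : rt v → v of length k+1
  have hrev : p.reverse.length = k + 1 := by
    rw [Walk.length_reverse, hp]; unfold dd at h; omega
  obtain ⟨u, hadj, q, hq⟩ := Walk.not_nil_iff.mp
    (Walk.not_nil_iff_lt_length.mpr (by rw [hrev]; omega))
  refine ⟨u, hadj, ?_, rt_adj hadj.symm⟩
  have hql : q.length = k := by
    have := hrev
    rw [hq] at this
    simpa using this
  have h1 : dd G u ≤ k := by
    have hd : G.dist u (rt G v) ≤ k := by
      have := SimpleGraph.dist_le q
      omega
    have heq : dd G u = G.dist (rt G v) u := by
      unfold dd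
      rw [rt_adj hadj.symm]
    rw [heq, SimpleGraph.dist_comm]
    exact hd
  have h2 : dd G v ≤ dd G u + 1 := dd_le_adj hadj.symm
  omega

/-- Meeting lemma: two distinct vertices at the same level are joined by
descending paths to a common vertex, internally disjoint. -/
lemma meet : ∀ (k : ℕ) {a b : V}, a ≠ b → rt G a = rt G b → dd G a = k → dd G b = k →
    ∃ (z : V) (p : G.Walk a z) (q : G.Walk b z),
      p.length = q.length ∧ 1 ≤ p.length ∧ dd G a = dd G z + p.length ∧
      p.IsPath ∧ q.IsPath ∧
      (∀ x ∈ p.support, dd G x ≤ dd G a) ∧ (∀ x ∈ q.support, dd G x ≤ dd G b) ∧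
      (∀ x ∈ p.support, x ∈ q.support → x = z) := by
  intro k
  induction k with
  | zero =>
    intro a b hab hrt ha hb
    exact absurd (by rw [dd_zero ha, dd_zero hb, hrt]) hab
  | succ k ih =>
    intro a b hab hrt ha hb
    obtain ⟨a1, haa1, ha1, hrta1⟩ := parent ha
    obtain ⟨b1, hbb1, hb1, hrtb1⟩ := parent hb
    by_cases hmeet : a1 = b1
    · subst hmeet
      refine ⟨a1, Walk.cons haa1 Walk.nil, Walk.cons hbb1 Walk.nil, rfl, le_refl _, by simp [ha, ha1], ?_, ?_, ?_, ?_, ?_⟩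
      · simp [Walk.isPath_def]
        intro h; rw [h] at ha; omega
      · simp [Walk.isPath_def]
        intro h; rw [h] at hb; omega
      · intro x hx
        simp at hx
        rcases hx with rfl | rfl <;> omega
      · intro x hx
        simp at hx
        rcases hx with rfl | rfl <;> omega
      · intro x hx hy
        simp at hx hy
        rcases hx with rfl | rfl
        · rcases hy with rfl | rfl
          · exact absurd rfl hab
          · rfl
        · rfl
    · obtain ⟨z, p1, q1, hlen, hlen1, hdz, hp1, hq1, hbd1, hbd2, hdisj⟩ :=
        ih hmeet (by rw [hrta1, hrtb1, hrt]) ha1 hb1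
      have hbnd1 : ∀ x ∈ p1.support, dd G x ≤ k := by intro x hx; have := hbd1 x hx; omega
      have hbnd2 : ∀ x ∈ q1.support, dd G x ≤ k := by intro x hx; have := hbd2 x hx; omega
      refine ⟨z, Walk.cons haa1 p1, Walk.cons hbb1 q1, by simp [hlen], by simp, ?_, ?_, ?_, ?_, ?_, ?_⟩
      · simp only [Walk.length_cons]; omega
      · rw [Walk.cons_isPath_iff]
        exact ⟨hp1, fun h => by have := hbnd1 a h; omega⟩
      · rw [Walk.cons_isPath_iff]
        exact ⟨hq1, fun h => by have := hbnd2 b h; omega⟩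
      · intro x hx
        rw [Walk.support_cons] at hx
        rcases List.mem_cons.mp hx with rfl | hx
        · omega
        · have := hbnd1 x hx; omega
      · intro x hx
        rw [Walk.support_cons] at hx
        rcases List.mem_cons.mp hx with rfl | hx
        · omega
        · have := hbnd2 x hx; omega
      · intro x hx hy
        rw [Walk.support_cons] at hx hy
        rcases List.mem_cons.mp hx with rfl | hx
        · rcases List.mem_cons.mp hy with rfl | hy
          · exact absurd rfl hab
          · have := hbnd2 x hy; omega
        · rcases List.mem_cons.mp hy with rfl | hy
          · have := hbnd1 x hx; omega
          · exact hdisj x hx hy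


lemma glue_isPath {a b z : V} {p : G.Walk a z} {q : G.Walk b z}
    (hp : p.IsPath) (hq : q.IsPath)
    (hdisj : ∀ x ∈ p.support, x ∈ q.support → x = z) :
    (p.append q.reverse).IsPath := by
  have hzrev : q.reverse.support = z :: q.reverse.support.tail :=
    Walk.support_eq_cons q.reverse
  have hqrevnd : q.reverse.support.Nodup := (Walk.isPath_def _).mp hq.reverse
  have hznot : z ∉ q.reverse.support.tail := by
    intro hc
    rw [hzrev] at hqrevnd
    exact (List.nodup_cons.mp hqrevnd).1 hc
  rw [Walk.isPath_def, Walk.support_append, List.nodup_append]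
  refine ⟨(Walk.isPath_def _).mp hp, ?_, ?_⟩
  · rw [hzrev] at hqrevnd
    exact (List.nodup_cons.mp hqrevnd).2
  · intro x hx x' hx2 hxx'
    subst hxx'
    have hxq : x ∈ q.support := by
      have : x ∈ q.reverse.support := List.mem_of_mem_tail hx2
      rwa [Walk.support_reverse, List.mem_reverse] at this
    have := hdisj x hx hxq
    subst this
    exact hznot hx2

lemma horiz (hG : IsTriangleForest G) {u u' : V} (h : G.Adj u u') (hd : dd G u = dd G u') :
    ∃ z, G.Adj u z ∧ G.Adj u' z ∧ dd G z + 1 = dd G u := by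
  have hne : u ≠ u' := h.ne
  rcases Nat.eq_zero_or_pos (dd G u) with h0 | hpos
  · exfalso
    have h0' : dd G u' = 0 := by omega
    have e1 := dd_zero h0
    have e2 := dd_zero h0'
    rw [rt_adj h] at e1
    exact hne (e1.trans e2.symm)
  obtain ⟨z, p, q, hlen, hlen1, hdz, hp, hq, hbp, hbq, hdisj⟩ :=
    meet (dd G u) hne (rt_adj h) rfl hd.symm
  have hznu : dd G z < dd G u := by omega
  have hu'np : u' ∉ p.support := by
    intro hmem
    have := hdisj u' hmem q.start_mem_support
    rw [this] at hd
    omega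
  have hunq : u ∉ q.support := by
    intro hmem
    have := hdisj u p.start_mem_support hmem
    rw [this] at hznu
    omega
  have hC : (Walk.cons h.symm (p.append q.reverse)).IsCycle := by
    rw [Walk.cons_isCycle_iff]
    refine ⟨glue_isPath hp hq hdisj, ?_⟩
    intro hmem
    rw [Walk.edges_append, List.mem_append] at hmem
    rcases hmem with hm | hm
    · exact hu'np (p.fst_mem_support_of_mem_edges hm)
    · rw [Walk.edges_reverse, List.mem_reverse] at hm
      exact hunq (q.snd_mem_support_of_mem_edges hm)
  have h3 := hG u' _ hC
  rw [Walk.length_cons, Walk.length_append, Walk.length_reverse] at h3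
  have hm1 : p.length = 1 := by omega
  have hm2 : q.length = 1 := by omega
  exact ⟨z, Walk.adj_of_length_eq_one hm1, Walk.adj_of_length_eq_one hm2, by omega⟩

lemma lower_unique (hG : IsTriangleForest G) {w u u' : V} (h1 : G.Adj w u) (h2 : G.Adj w u')
    (hd1 : dd G u < dd G w) (hd2 : dd G u' < dd G w) : u = u' := by
  by_contra hne
  have hw1 : dd G w ≤ dd G u + 1 := dd_le_adj h1.symm
  have hw2 : dd G w ≤ dd G u' + 1 := dd_le_adj h2.symm
  have hdu : dd G u = dd G u' := by omega
  have hrtu : rt G u = rt G u' := by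
    rw [← rt_adj h1, rt_adj h2]
  obtain ⟨z, p, q, hlen, hlen1, hdz, hp, hq, hbp, hbq, hdisj⟩ :=
    meet (dd G u) hne hrtu rfl hdu.symm
  have hWpath : (p.append q.reverse).IsPath := glue_isPath hp hq hdisj
  have hwW : w ∉ (p.append q.reverse).support := by
    intro hmem
    rw [Walk.support_append, List.mem_append] at hmem
    rcases hmem with hm | hm
    · have := hbp w hm; omega
    · have : w ∈ q.support := by
        have : w ∈ q.reverse.support := List.mem_of_mem_tail hm
        rwa [Walk.support_reverse, List.mem_reverse] at this
      have := hbq w this; omega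
  have hinner : ((p.append q.reverse).concat h2.symm).IsPath := by
    rw [Walk.isPath_def, Walk.support_concat]
    rw [List.nodup_append]
    refine ⟨(Walk.isPath_def _).mp hWpath, List.nodup_singleton w, ?_⟩
    intro x hx x' hx2 hxx'
    subst hxx'
    rw [List.mem_singleton] at hx2
    subst hx2
    exact hwW hx
  have hC : (Walk.cons h1 ((p.append q.reverse).concat h2.symm)).IsCycle := by
    rw [Walk.cons_isCycle_iff]
    refine ⟨hinner, ?_⟩
    intro hmem
    rw [Walk.edges_concat, List.concat_eq_append, List.mem_append] at hmem
    rcases hmem with hm | hm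
    · exact hwW ((p.append q.reverse).fst_mem_support_of_mem_edges hm)
    · rw [List.mem_singleton, Sym2.eq_iff] at hm
      rcases hm with ⟨_, huw⟩ | ⟨_, huu'⟩
      · exact h1.ne huw.symm
      · exact hne huu'
  have h3 := hG w _ hC
  rw [Walk.length_cons, Walk.length_concat, Walk.length_append, Walk.length_reverse] at h3
  omega


variable (G) in
/-- the matching: all edges that are the base of some triangle with a lower apex. -/
def MM : Set (Sym2 V) := {e | e ∈ G.edgeSet ∧ ∃ z, ∀ x ∈ e, G.Adj z x ∧ dd G z < dd G x}

lemma mm_pair {a b : V} : s(a,b) ∈ MM G ↔ G.Adj a b ∧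
    ∃ z, G.Adj z a ∧ G.Adj z b ∧ dd G z < dd G a ∧ dd G z < dd G b := by
  constructor
  · rintro ⟨he, z, hz⟩
    have h1 := hz a (by simp)
    have h2 := hz b (by simp)
    exact ⟨he, z, h1.1, h2.1, h1.2, h2.2⟩
  · rintro ⟨he, z, h1, h2, h3, h4⟩
    refine ⟨he, z, ?_⟩
    intro x hx
    rw [Sym2.mem_iff] at hx
    rcases hx with rfl | rfl
    · exact ⟨h1, h3⟩
    · exact ⟨h2, h4⟩

lemma mm_horiz {a b : V} (h : s(a,b) ∈ MM G) : dd G a = dd G b := by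
  obtain ⟨he, z, h1, h2, h3, h4⟩ := mm_pair.mp h
  have ha := dd_le_adj h1
  have hb := dd_le_adj h2
  omega

lemma matching (hG : IsTriangleForest G) : IsMatchingSet G (MM G) := by
  refine ⟨fun e he => he.1, ?_⟩
  intro e he f hf hef v hve hvf
  obtain ⟨b, rfl⟩ := Sym2.mem_iff_exists.mp hve
  obtain ⟨b', rfl⟩ := Sym2.mem_iff_exists.mp hvf
  obtain ⟨hadj, z, hz1, hz2, hz3, hz4⟩ := mm_pair.mp he
  obtain ⟨hadj', z', hz1', hz2', hz3', hz4'⟩ := mm_pair.mp hf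
  have hzz : z = z' := lower_unique hG hz1.symm hz1'.symm hz3 hz3'
  subst hzz
  have hbb : b ≠ b' := fun h => hef (by rw [h])
  -- explicit 4-cycle b → v → b' → z → b
  have h1 : v ≠ b' := hadj'.ne
  have h2 : v ≠ z := fun h => by rw [h] at hz3; omega
  have h3 : v ≠ b := hadj.ne
  have h4 : b' ≠ z := fun h => by rw [h] at hz4'; omega
  have h5 : z ≠ b := fun h => by rw [← h] at hz4; omega
  have hC : (Walk.cons hadj.symm (Walk.cons hadj'
      (Walk.cons hz2'.symm (Walk.cons hz2 Walk.nil)))).IsCycle := by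
    rw [Walk.cons_isCycle_iff]
    constructor
    · rw [Walk.isPath_def]
      simp only [Walk.support_cons, Walk.support_nil]
      simp [h1, h2, h3, h4, h5, hbb, hbb.symm]
    · intro hmem
      simp only [Walk.edges_cons, Walk.edges_nil, List.mem_cons, List.not_mem_nil,
        or_false, Sym2.eq_iff] at hmem
      rcases hmem with (⟨h6, _⟩ | ⟨h6, _⟩) | (⟨h6, _⟩ | ⟨h6, _⟩) | (⟨h6, _⟩ | ⟨_, h6⟩)
      · exact h3 h6.symm
      · exact hbb h6
      · exact hbb h6
      · exact h5 h6.symm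
      · exact h5 h6.symm
      · exact h2 h6
  have h3 := hG b _ hC
  simp [Walk.length_cons] at h3

variable (G) in
noncomputable def RR (S : Set V) : ℕ := sSup (dd G '' S)

lemma rank_eq {S : Set V} (hS : S ∈ matchingParts (MM G)) {v : V} (hv : v ∈ S) :
    RR G S = dd G v := by
  rcases hS with ⟨e, he, rfl⟩ | ⟨w, _, rfl⟩
  · obtain ⟨a, b⟩ := e
    have hd := mm_horiz he
    have hset : {x | x ∈ s(a,b)} = ({a, b} : Set V) := by
      ext x; simp [Sym2.mem_iff]
    rw [hset] at hv ⊢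
    have himg : dd G '' ({a, b} : Set V) = {dd G a} := by
      rw [Set.image_pair]
      rw [← hd]
      simp
    rw [RR, himg, csSup_singleton]
    rcases hv with rfl | hv
    · rfl
    · rw [Set.mem_singleton_iff] at hv
      rw [hv, hd]
  · rw [Set.mem_singleton_iff] at hv
    subst hv
    simp [RR]

lemma parts_disjoint {M : Set (Sym2 V)} (hM : IsMatchingSet G M) {S T : Set V}
    (hS : S ∈ matchingParts M) (hT : T ∈ matchingParts M) {v : V}
    (hvS : v ∈ S) (hvT : v ∈ T) : S = T := by
  rcases hS with ⟨e, he, rfl⟩ | ⟨w, hw, rfl⟩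
  · rcases hT with ⟨f, hf, rfl⟩ | ⟨w', hw', rfl⟩
    · by_cases hef : e = f
      · rw [hef]
      · exact absurd hvT (hM.2 he hf hef v hvS)
    · rw [Set.mem_singleton_iff] at hvT
      subst hvT
      exact absurd hvS (hw' e he)
  · rcases hT with ⟨f, hf, rfl⟩ | ⟨w', hw', rfl⟩
    · rw [Set.mem_singleton_iff] at hvS
      subst hvS
      exact absurd hvT (hw f hf)
    · rw [Set.mem_singleton_iff] at hvS hvT
      rw [← hvS, ← hvT]

lemma acyclic_of_rank {W : Type} (H : SimpleGraph W) (r : W → ℕ)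
    (h1 : ∀ ⦃u v⦄, H.Adj u v → r u ≠ r v)
    (h2 : ∀ ⦃u v v'⦄, H.Adj u v → H.Adj u v' → r v < r u → r v' < r u → v = v') :
    H.IsAcyclic := by
  classical
  intro w c hc
  have hne : c.support.toFinset.Nonempty := by
    simp [List.toFinset_nonempty_iff, Walk.support_ne_nil]
  obtain ⟨u, hu_mem, hu_max⟩ := Finset.exists_max_image c.support.toFinset r hne
  rw [List.mem_toFinset] at hu_mem
  set c' := c.rotate u hu_mem with hc'def
  have hc' : c'.IsCycle := hc.rotate hu_mem
  have hc'3 : 3 ≤ c'.length := hc'.three_le_length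
  have hbound : ∀ x ∈ c'.support, r x ≤ r u := by
    intro x hx
    rw [Walk.support_eq_cons] at hx
    rcases List.mem_cons.mp hx with rfl | hx
    · exact le_refl _
    · have hperm := Walk.support_rotate c u hu_mem
      have : x ∈ c.support.tail := hperm.mem_iff.mp hx
      exact hu_max x (List.mem_toFinset.mpr (List.mem_of_mem_tail this))
  obtain ⟨x, hux, p, hcons⟩ := Walk.not_nil_iff.mp hc'.not_nil
  rw [hcons] at hc'
  rw [Walk.cons_isCycle_iff] at hc'
  obtain ⟨hp, hedge⟩ := hc'
  have hxu : x ≠ u := fun h => by subst h; exact hux.ne rfl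
  obtain ⟨y, huy, q, hq⟩ := Walk.not_nil_iff.mp
    (Walk.not_nil_of_ne (fun h : u = x => hxu h.symm) : ¬ p.reverse.Nil)
  have hyx : y ≠ x := by
    intro h
    subst h
    have hqpath : q.IsPath := by
      have : p.reverse.IsPath := hp.reverse
      rw [hq, Walk.cons_isPath_iff] at this
      exact this.1
    have hqnil : q = Walk.nil := (Walk.isPath_iff_eq_nil (p := q)).mp hqpath
    have hplen : p.length = 1 := by
      have : p.reverse.length = 1 := by rw [hq, hqnil]; simp
      rw [Walk.length_reverse] at this
      exact this
    rw [hcons] at hc'3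
    rw [Walk.length_cons, hplen] at hc'3
    omega
  have hxmem : x ∈ c'.support := by
    rw [hcons, Walk.support_cons]
    exact List.mem_cons_of_mem _ p.start_mem_support
  have hymem : y ∈ c'.support := by
    rw [hcons, Walk.support_cons]
    apply List.mem_cons_of_mem
    have : y ∈ p.reverse.support := by
      rw [hq, Walk.support_cons]
      exact List.mem_cons_of_mem _ q.start_mem_support
    rwa [Walk.support_reverse, List.mem_reverse] at this
  have hrx : r x < r u := lt_of_le_of_ne (hbound x hxmem) (h1 hux).symm
  have hadj_uy : H.Adj u y := huy
  have hry : r y < r u := lt_of_le_of_ne (hbound y hymem) (h1 huy).symm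
  exact hyx ((h2 hux huy hrx hry).symm)


end TF4

/-- Every triangle-forest `G` has a matching `M` such that `G/M` is a forest. -/
theorem stmt4 {V : Type} [Fintype V] (G : SimpleGraph V) (hG : IsTriangleForest G) :
    ∃ M : Set (Sym2 V), IsMatchingSet G M ∧ (ContractMatching G M).IsAcyclic := by
  classical
  refine ⟨TF4.MM G, TF4.matching hG, ?_⟩
  apply TF4.acyclic_of_rank _ (fun S => TF4.RR G S.1)
  · rintro ⟨S, hS⟩ ⟨T, hT⟩ hadj heq
    simp only [ContractMatching, QuotientGraph] at hadj
    obtain ⟨hne, a, ha, b, hb, hab⟩ := hadj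
    simp only at heq
    have hd : TF4.dd G a = TF4.dd G b := by
      rw [← TF4.rank_eq hS ha, ← TF4.rank_eq hT hb, heq]
    obtain ⟨z, hz1, hz2, hz3⟩ := TF4.horiz hG hab hd
    have hmm : s(a, b) ∈ TF4.MM G :=
      TF4.mm_pair.mpr ⟨hab, z, hz1.symm, hz2.symm, by omega, by omega⟩
    have hP : {x | x ∈ s(a, b)} ∈ matchingParts (TF4.MM G) := Or.inl ⟨_, hmm, rfl⟩
    have haP : a ∈ {x | x ∈ s(a, b)} := by simp
    have hbP : b ∈ {x | x ∈ s(a, b)} := by simp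
    have hSP := TF4.parts_disjoint (TF4.matching hG) hS hP ha haP
    have hTP := TF4.parts_disjoint (TF4.matching hG) hT hP hb hbP
    exact hne (Subtype.ext (hSP.trans hTP.symm))
  · rintro ⟨S, hS⟩ ⟨T, hT⟩ ⟨T', hT'⟩ hadj1 hadj2
      hlt hlt'
    simp only [ContractMatching, QuotientGraph] at hadj1 hadj2
    obtain ⟨hne1, a, ha, t, ht, hat⟩ := hadj1
    obtain ⟨hne2, a', ha', t', ht', hat'⟩ := hadj2
    simp only at hlt hlt'
    have h1 : TF4.dd G t < TF4.dd G a := by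
      rw [← TF4.rank_eq hT ht, ← TF4.rank_eq hS ha]; exact hlt
    have h2 : TF4.dd G t' < TF4.dd G a' := by
      rw [← TF4.rank_eq hT' ht', ← TF4.rank_eq hS ha']; exact hlt'
    have htt : t = t' := by
      rcases hS with ⟨e, he, hSe⟩ | ⟨w, hw, hSw⟩
      · obtain ⟨x, y⟩ := e
        obtain ⟨hadjxy, z, hzx, hzy, hzdx, hzdy⟩ := TF4.mm_pair.mp he
        have hmema : a = x ∨ a = y := by
          subst hSe; simpa [Sym2.mem_iff] using ha
        have hmema' : a' = x ∨ a' = y := by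
          subst hSe; simpa [Sym2.mem_iff] using ha'
        have htz : t = z := by
          rcases hmema with rfl | rfl
          · exact TF4.lower_unique hG hat hzx.symm h1 hzdx
          · exact TF4.lower_unique hG hat hzy.symm h1 hzdy
        have ht'z : t' = z := by
          rcases hmema' with rfl | rfl
          · exact TF4.lower_unique hG hat' hzx.symm h2 hzdx
          · exact TF4.lower_unique hG hat' hzy.symm h2 hzdy
        rw [htz, ht'z]
      · have haw : a = w := by subst hSw; simpa using ha
        have ha'w : a' = w := by subst hSw; simpa using ha'
        subst haw
        rw [ha'w] at hat' h2
        exact TF4.lower_unique hG hat hat' h1 h2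
    exact Subtype.ext (TF4.parts_disjoint (TF4.matching hG) hT hT' ht (htt ▸ ht'))
end

section
/- For any graphs H₁, H₂ and any positive integer c, a graph G is contained in H₁ ⊠ H₂ ⊠ K_c if and only if G has partitions 𝒫₁ and 𝒫₂ of its vertex set such that G/𝒫ᵢ is contained in Hᵢ for each i ∈ {1,2}, and |A₁ ∩ A₂| ≤ c for each A₁ ∈ 𝒫₁ and A₂ ∈ 𝒫₂. -/
open SimpleGraph

lemma fiber_partition {V γ : Type} (φ : V → γ) :
    Setoid.IsPartition {S : Set V | ∃ a, S = φ ⁻¹' {a} ∧ S.Nonempty} := by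
  constructor
  · rintro ⟨a, h, hne⟩
    exact hne.ne_empty rfl
  · intro v
    refine ⟨φ ⁻¹' {φ v}, ⟨⟨φ v, rfl, ⟨v, rfl⟩⟩, rfl⟩, ?_⟩
    rintro S ⟨⟨a, rfl, -⟩, hvS⟩
    have : φ v = a := hvS
    rw [this]

lemma fiber_contains {V γ : Type} (G : SimpleGraph V) (H : SimpleGraph γ) (φ : V → γ)
    (h : ∀ u v, G.Adj u v → φ u = φ v ∨ H.Adj (φ u) (φ v)) :
    Contains (QuotientGraph G {S : Set V | ∃ a, S = φ ⁻¹' {a} ∧ S.Nonempty}) H := by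
  have hsel : ∀ S : {S : Set V | ∃ a, S = φ ⁻¹' {a} ∧ S.Nonempty},
      ∃ a, (S : Set V) = φ ⁻¹' {a} := fun S => ⟨S.2.choose, S.2.choose_spec.1⟩
  choose e he using hsel
  have hinj : Function.Injective e := by
    intro S T hST
    apply Subtype.ext
    rw [he S, he T, hST]
  refine ⟨⟨e, hinj⟩, ?_⟩
  rintro A B ⟨hne, a, ha, b, hb, hab⟩
  have hpa : φ a = e A := by rw [he A] at ha; exact ha
  have hpb : φ b = e B := by rw [he B] at hb; exact hb
  rcases h a b hab with heq | hadj
  · exact absurd (hinj (hpa ▸ hpb ▸ heq)) hne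
  · rwa [hpa, hpb] at hadj

/-- A graph `G` is contained in `H₁ ⊠ H₂ ⊠ K_c` iff `G` has partitions `𝒫₁` and `𝒫₂` such
that `G/𝒫ᵢ` is contained in `Hᵢ` for `i ∈ {1,2}` and `|A₁ ∩ A₂| ≤ c` for all `A₁ ∈ 𝒫₁`,
`A₂ ∈ 𝒫₂`. -/
theorem stmt9 {V α β : Type} [Fintype V] [Fintype α] [Fintype β]
    (G : SimpleGraph V) (H₁ : SimpleGraph α) (H₂ : SimpleGraph β) (c : ℕ) (hc : 1 ≤ c) :
    Contains G (StrongProd (StrongProd H₁ H₂) (completeGraph (Fin c))) ↔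
      ∃ P₁ P₂ : Set (Set V), Setoid.IsPartition P₁ ∧ Setoid.IsPartition P₂ ∧
        Contains (QuotientGraph G P₁) H₁ ∧ Contains (QuotientGraph G P₂) H₂ ∧
        ∀ A₁ ∈ P₁, ∀ A₂ ∈ P₂, (A₁ ∩ A₂).ncard ≤ c := by
  classical
  constructor
  · rintro ⟨f, hf⟩
    refine ⟨{S | ∃ a, S = (fun v => (f v).1.1) ⁻¹' {a} ∧ S.Nonempty},
            {S | ∃ b, S = (fun v => (f v).1.2) ⁻¹' {b} ∧ S.Nonempty},
            fiber_partition _, fiber_partition _, ?_, ?_, ?_⟩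
    · apply fiber_contains
      intro u v huv
      obtain ⟨-, h1, -⟩ := hf huv
      rcases h1 with h1 | ⟨-, h11, -⟩
      · exact Or.inl (congrArg Prod.fst h1)
      · exact h11
    · apply fiber_contains
      intro u v huv
      obtain ⟨-, h1, -⟩ := hf huv
      rcases h1 with h1 | ⟨-, -, h12⟩
      · exact Or.inl (congrArg Prod.snd h1)
      · exact h12
    · rintro A₁ ⟨a, rfl, -⟩ A₂ ⟨b, rfl, -⟩
      have hinj : Set.InjOn (fun v => (f v).2)
          (((fun v => (f v).1.1) ⁻¹' {a}) ∩ ((fun v => (f v).1.2) ⁻¹' {b})) := by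
        rintro u ⟨hu1, hu2⟩ v ⟨hv1, hv2⟩ huv
        simp only [Set.mem_preimage, Set.mem_singleton_iff] at hu1 hu2 hv1 hv2
        apply f.injective
        exact Prod.ext (Prod.ext (hu1.trans hv1.symm) (hu2.trans hv2.symm)) huv
      calc (((fun v => (f v).1.1) ⁻¹' {a}) ∩ ((fun v => (f v).1.2) ⁻¹' {b})).ncard
          = ((fun v => (f v).2) '' _).ncard := (Set.ncard_image_of_injOn hinj).symm
        _ ≤ (Set.univ : Set (Fin c)).ncard :=
            Set.ncard_le_ncard (Set.subset_univ _) Set.finite_univ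
        _ = c := by simp [Set.ncard_univ]
  · rintro ⟨P₁, P₂, hP₁, hP₂, ⟨g₁, hg₁⟩, ⟨g₂, hg₂⟩, hcap⟩
    choose Q₁ hQ₁mem hQ₁v using fun v => (hP₁.2 v).exists
    choose Q₂ hQ₂mem hQ₂v using fun v => (hP₂.2 v).exists
    -- index functions within intersections
    have hE : ∀ S T : Set V, ∃ e : V → Fin c,
        (S ∩ T).ncard ≤ c → Set.InjOn e (S ∩ T) := by
      intro S T
      by_cases h : (S ∩ T).ncard ≤ c
      · haveI := Fintype.ofFinite ↥(S ∩ T)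
        have hcard : Fintype.card ↥(S ∩ T) ≤ Fintype.card (Fin c) := by
          rw [Fintype.card_fin, ← Nat.card_eq_fintype_card, Nat.card_coe_set_eq]
          exact h
        obtain ⟨e⟩ := Function.Embedding.nonempty_of_card_le hcard
        refine ⟨fun v => if hv : v ∈ S ∩ T then e ⟨v, hv⟩ else ⟨0, hc⟩, fun _ => ?_⟩
        intro u hu v hv huv
        simp only [dif_pos hu, dif_pos hv] at huv
        exact congrArg Subtype.val (e.injective huv)
      · exact ⟨fun _ => ⟨0, hc⟩, fun h' => absurd h' h⟩
    choose E hEinj using hE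
    set f : V → (α × β) × Fin c :=
      fun v => ((g₁ ⟨Q₁ v, hQ₁mem v⟩, g₂ ⟨Q₂ v, hQ₂mem v⟩), E (Q₁ v) (Q₂ v) v) with hfdef
    have hfin : Function.Injective f := by
      intro u v huv
      have h1 : Q₁ u = Q₁ v := by
        have := congrArg (fun p => p.1.1) huv
        exact congrArg Subtype.val (g₁.injective this)
      have h2 : Q₂ u = Q₂ v := by
        have := congrArg (fun p => p.1.2) huv
        exact congrArg Subtype.val (g₂.injective this)
      have h3 : E (Q₁ v) (Q₂ v) u = E (Q₁ v) (Q₂ v) v := by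
        have := congrArg (fun p => p.2) huv
        simpa [hfdef, h1, h2] using this
      exact hEinj (Q₁ v) (Q₂ v) (hcap _ (hQ₁mem v) _ (hQ₂mem v))
        ⟨h1 ▸ hQ₁v u, h2 ▸ hQ₂v u⟩ ⟨hQ₁v v, hQ₂v v⟩ h3
    refine ⟨⟨f, hfin⟩, ?_⟩
    intro u v huv
    have hne : f u ≠ f v := fun h => (G.ne_of_adj huv) (hfin h)
    refine ⟨hne, ?_, ?_⟩
    · by_cases heq : (f u).1 = (f v).1
      · exact Or.inl heq
      · refine Or.inr ⟨heq, ?_, ?_⟩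
        · by_cases h1 : Q₁ u = Q₁ v
          · left
            show g₁ ⟨Q₁ u, hQ₁mem u⟩ = g₁ ⟨Q₁ v, hQ₁mem v⟩
            congr 1
            exact Subtype.ext h1
          · right
            exact hg₁ ⟨fun h => h1 (congrArg Subtype.val h), u, hQ₁v u, v, hQ₁v v, huv⟩
        · by_cases h2 : Q₂ u = Q₂ v
          · left
            show g₂ ⟨Q₂ u, hQ₂mem u⟩ = g₂ ⟨Q₂ v, hQ₂mem v⟩
            congr 1
            exact Subtype.ext h2
          · right
            exact hg₂ ⟨fun h => h2 (congrArg Subtype.val h), u, hQ₂v u, v, hQ₂v v, huv⟩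
    · rcases Classical.em ((f u).2 = (f v).2) with h | h
      · exact Or.inl h
      · exact Or.inr h
end
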